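/- Let f : ℝᵈ → ℝ be a quadratic centered at x* with symmetric Hessian H having no eigenvalue in the interval (−γ, μ) for some μ, γ > 0, and ‖H‖ ≤ L. Suppose the gradient flow orbit yₖ = y(kh) has gradients bounded by ℓ up to iteration K. Let ε > 0 and 0 < h ≤ min{με/(Lℓ), γε/(2Lℓ), 1/L}. Then there exists a gradient descent orbit (xₖ), x_{k+1} = xₖ − h∇f(xₖ), with ‖xₖ − yₖ‖ ≤ ε for all 0 ≤ k ≤ K. -/

import Mathlib

set_option maxHeartbeats 1000000

private lemma geom_sum_le_inv_one_sub {r : ℝ} (h0 : 0 ≤ r) (h1 : r < 1) (n : ℕ) :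
    ∑ m ∈ Finset.range n, r ^ m ≤ 1 / (1 - r) := by
  rw [geom_sum_eq h1.ne n]
  have he : (r ^ n - 1) / (r - 1) = (1 - r ^ n) / (1 - r) := by
    rw [← neg_div_neg_eq]; ring_nf
  rw [he]
  have hrn : 0 ≤ r ^ n := pow_nonneg h0 n
  gcongr
  · linarith

private lemma euclid_norm_le_of_abs_le {d : ℕ} {x z : EuclideanSpace ℝ (Fin d)} {C : ℝ}
    (hC : 0 ≤ C) (hle : ∀ i, |x i| ≤ C * |z i|) : ‖x‖ ≤ C * ‖z‖ := by
  rw [EuclideanSpace.norm_eq, EuclideanSpace.norm_eq]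
  have : C * Real.sqrt (∑ i, ‖z i‖ ^ 2) = Real.sqrt (C ^ 2 * ∑ i, ‖z i‖ ^ 2) := by
    rw [Real.sqrt_mul (sq_nonneg C), Real.sqrt_sq hC]
  rw [this]
  apply Real.sqrt_le_sqrt
  rw [Finset.mul_sum]
  apply Finset.sum_le_sum
  intro i _
  have := hle i
  simp only [Real.norm_eq_abs]
  calc |x i| ^ 2 ≤ (C * |z i|) ^ 2 := by
        apply sq_le_sq' <;>
          [linarith [abs_nonneg (x i), mul_nonneg hC (abs_nonneg (z i))]; exact this]
      _ = C ^ 2 * |z i| ^ 2 := by ring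

/-- The explicit coordinate formula for the shadowing error. -/
private noncomputable def cfun {d : ℕ} (K : ℕ) (μ h : ℝ) (lam : Fin d → ℝ)
    (w : ℕ → EuclideanSpace ℝ (Fin d)) (k : ℕ) : EuclideanSpace ℝ (Fin d) :=
  WithLp.toLp 2 (fun i =>
    if μ ≤ lam i then -(∑ j ∈ Finset.range k, (1 - h * lam i) ^ (k - 1 - j) * w j i)
    else ∑ j ∈ Finset.Ico k K, (1 - h * lam i)⁻¹ ^ (j + 1 - k) * w j i)

private lemma cfun_step {d : ℕ} {K : ℕ} {μ h : ℝ} {lam : Fin d → ℝ}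
    {w : ℕ → EuclideanSpace ℝ (Fin d)}
    (hunst : ∀ i, ¬ μ ≤ lam i → 1 - h * lam i ≠ 0) {k : ℕ} (hk : k < K) (i : Fin d) :
    cfun K μ h lam w (k + 1) i = (1 - h * lam i) * cfun K μ h lam w k i - w k i := by
  by_cases hi : μ ≤ lam i
  · simp only [cfun, PiLp.toLp_apply, if_pos hi]
    rw [Finset.sum_range_succ]
    have hstep : (1 - h * lam i) * -(∑ j ∈ Finset.range k, (1 - h * lam i) ^ (k - 1 - j) * w j i)
        = -(∑ j ∈ Finset.range k, (1 - h * lam i) ^ (k + 1 - 1 - j) * w j i) := by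
      rw [mul_neg, neg_inj, Finset.mul_sum]
      apply Finset.sum_congr rfl
      intro j hj
      have hj' : j < k := Finset.mem_range.mp hj
      have hp : (1 - h * lam i) * (1 - h * lam i) ^ (k - 1 - j)
          = (1 - h * lam i) ^ (k + 1 - 1 - j) := by
        rw [← pow_succ']
        congr 1
        omega
      rw [← mul_assoc, hp]
    rw [hstep]
    have h0 : k + 1 - 1 - k = 0 := by omega
    rw [h0, pow_zero, one_mul]
    ring
  · simp only [cfun, PiLp.toLp_apply, if_neg hi]
    have hane : 1 - h * lam i ≠ 0 := hunst i hi
    have hstep : (1 - h * lam i) * (∑ j ∈ Finset.Ico k K, (1 - h * lam i)⁻¹ ^ (j + 1 - k) * w j i)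
        = ∑ j ∈ Finset.Ico k K, (1 - h * lam i)⁻¹ ^ (j - k) * w j i := by
      rw [Finset.mul_sum]
      apply Finset.sum_congr rfl
      intro j hj
      have hj' : k ≤ j := (Finset.mem_Ico.mp hj).1
      have he : j + 1 - k = (j - k) + 1 := by omega
      rw [he, pow_succ, ← mul_assoc]
      rw [mul_comm (1 - h * lam i), mul_assoc ((1 - h * lam i)⁻¹ ^ (j - k)),
        inv_mul_cancel₀ hane, mul_one]
    rw [hstep, Finset.sum_eq_sum_Ico_succ_bot hk]
    have h00 : k - k = 0 := by omega
    rw [h00, pow_zero, one_mul]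
    have hcongr : ∑ j ∈ Finset.Ico (k + 1) K, (1 - h * lam i)⁻¹ ^ (j - k) * w j i
        = ∑ j ∈ Finset.Ico (k + 1) K, (1 - h * lam i)⁻¹ ^ (j + 1 - (k + 1)) * w j i := by
      apply Finset.sum_congr rfl
      intro j _
      congr 2
      omega
    rw [← hcongr]
    ring

private lemma cfun_norm {d : ℕ} {K : ℕ} {μ γ h δmax : ℝ} {lam : Fin d → ℝ}
    {w : ℕ → EuclideanSpace ℝ (Fin d)}
    (hμ : 0 < μ) (hγ : 0 < γ) (hh : 0 < h) (hδmaxnn : 0 ≤ δmax)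
    (hstab : ∀ i, μ ≤ lam i → 0 ≤ 1 - h * lam i ∧ 1 - h * lam i ≤ 1 - h * μ)
    (hstab2 : (∃ i, μ ≤ lam i) → 0 ≤ 1 - h * μ)
    (hunst : ∀ i, ¬ μ ≤ lam i → 1 + h * γ ≤ 1 - h * lam i)
    (hw : ∀ j, j < K → ‖w j‖ ≤ δmax) {k : ℕ} (hk : k ≤ K) :
    ‖cfun K μ h lam w k‖ ≤ δmax / (h * μ) + δmax / (h * γ) := by
  classical
  set cs : EuclideanSpace ℝ (Fin d) :=
    WithLp.toLp 2 (fun i => if μ ≤ lam i then cfun K μ h lam w k i else 0) with hcsdef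
  set cu : EuclideanSpace ℝ (Fin d) :=
    WithLp.toLp 2 (fun i => if μ ≤ lam i then 0 else cfun K μ h lam w k i) with hcudef
  have hsplit : cfun K μ h lam w k = cs + cu := by
    ext i
    have he : (cs + cu) i = cs i + cu i := rfl
    rw [he, hcsdef, hcudef]
    by_cases hi : μ ≤ lam i
    · simp [hi]
    · simp [hi]
  set vs : ℕ → EuclideanSpace ℝ (Fin d) :=
    fun j => (WithLp.toLp 2 (fun i => if μ ≤ lam i then (1 - h * lam i) ^ (k - 1 - j) * w j i else 0) :
      EuclideanSpace ℝ (Fin d)) with hvsdef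
  set vu : ℕ → EuclideanSpace ℝ (Fin d) :=
    fun j => (WithLp.toLp 2 (fun i => if μ ≤ lam i then 0 else (1 - h * lam i)⁻¹ ^ (j + 1 - k) * w j i) :
      EuclideanSpace ℝ (Fin d)) with hvudef
  have hcs : ‖cs‖ ≤ δmax / (h * μ) := by
    by_cases hex : ∃ i, μ ≤ lam i
    · have hρ0 : 0 ≤ 1 - h * μ := hstab2 hex
      have hρ1 : 1 - h * μ < 1 := by nlinarith
      have hcs_eq : cs = -(∑ j ∈ Finset.range k, vs j) := by
        ext i
        have he : (-(∑ j ∈ Finset.range k, vs j)) i = -((∑ j ∈ Finset.range k, vs j) i) := rfl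
        rw [he, WithLp.ofLp_sum, Finset.sum_apply, hcsdef, hvsdef]
        by_cases hi : μ ≤ lam i
        · simp only [cfun, PiLp.toLp_apply, if_pos hi]
        · simp only [if_neg hi]
          simp
      rw [hcs_eq, norm_neg]
      have hterm : ∀ j ∈ Finset.range k, ‖vs j‖ ≤ (1 - h * μ) ^ (k - 1 - j) * δmax := by
        intro j hj
        have hjk : j < k := Finset.mem_range.mp hj
        have hρm : (0:ℝ) ≤ (1 - h * μ) ^ (k - 1 - j) := pow_nonneg hρ0 _
        have h1 : ‖vs j‖ ≤ (1 - h * μ) ^ (k - 1 - j) * ‖w j‖ := by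
          rw [hvsdef]
          apply euclid_norm_le_of_abs_le hρm
          intro i
          by_cases hi : μ ≤ lam i
          · simp only [if_pos hi]
            rw [abs_mul, abs_pow]
            apply mul_le_mul_of_nonneg_right _ (abs_nonneg _)
            apply pow_le_pow_left₀ (abs_nonneg _)
            rw [abs_le]
            obtain ⟨ha, hb⟩ := hstab i hi
            constructor <;> linarith
          · simp only [if_neg hi, abs_zero]
            positivity
        apply le_trans h1
        apply mul_le_mul_of_nonneg_left _ hρm
        exact hw j (lt_of_lt_of_le hjk hk)
      calc ‖∑ j ∈ Finset.range k, vs j‖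
          ≤ ∑ j ∈ Finset.range k, (1 - h * μ) ^ (k - 1 - j) * δmax :=
            le_trans (norm_sum_le _ _) (Finset.sum_le_sum hterm)
        _ = δmax * ∑ j ∈ Finset.range k, (1 - h * μ) ^ (k - 1 - j) := by
            rw [Finset.mul_sum]
            apply Finset.sum_congr rfl
            intro j _; ring
        _ = δmax * ∑ m ∈ Finset.range k, (1 - h * μ) ^ m := by
            rw [Finset.sum_range_reflect (fun m => (1 - h * μ) ^ m) k]
        _ ≤ δmax * (1 / (1 - (1 - h * μ))) := by
            apply mul_le_mul_of_nonneg_left (geom_sum_le_inv_one_sub hρ0 hρ1 k) hδmaxnn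
        _ = δmax / (h * μ) := by
            have he : 1 - (1 - h * μ) = h * μ := by ring
            rw [he, one_div, div_eq_mul_inv]
    · have hcs0 : cs = 0 := by
        ext i
        have hni : ¬ μ ≤ lam i := fun hcon => hex ⟨i, hcon⟩
        rw [hcsdef]
        simp [hni]
      rw [hcs0, norm_zero]
      positivity
  have hcu : ‖cu‖ ≤ δmax / (h * γ) := by
    set q : ℝ := (1 + h * γ)⁻¹ with hqdef
    have hβ : (1:ℝ) < 1 + h * γ := by nlinarith
    have hq0 : 0 < q := by rw [hqdef]; positivity
    have hq1 : q < 1 := by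
      rw [hqdef, inv_lt_one_iff₀]; right; exact hβ
    have hcu_eq : cu = ∑ j ∈ Finset.Ico k K, vu j := by
      ext i
      rw [WithLp.ofLp_sum, Finset.sum_apply, hcudef, hvudef]
      by_cases hi : μ ≤ lam i
      · simp [hi]
      · simp only [PiLp.toLp_apply, if_neg hi, cfun]
    have hterm : ∀ j ∈ Finset.Ico k K, ‖vu j‖ ≤ q ^ (j + 1 - k) * δmax := by
      intro j hj
      obtain ⟨hjk, hjK⟩ := Finset.mem_Ico.mp hj
      have hqm : (0:ℝ) ≤ q ^ (j + 1 - k) := (pow_pos hq0 _).le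
      have h1 : ‖vu j‖ ≤ q ^ (j + 1 - k) * ‖w j‖ := by
        rw [hvudef]
        apply euclid_norm_le_of_abs_le hqm
        intro i
        by_cases hi : μ ≤ lam i
        · simp only [if_pos hi, abs_zero]; positivity
        · simp only [if_neg hi]
          rw [abs_mul, abs_pow]
          apply mul_le_mul_of_nonneg_right _ (abs_nonneg _)
          apply pow_le_pow_left₀ (abs_nonneg _)
          have hav := hunst i hi
          have havpos : (0:ℝ) < 1 - h * lam i := by nlinarith
          rw [abs_of_pos (inv_pos.mpr havpos), hqdef]
          apply inv_anti₀ (by nlinarith) hav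
      apply le_trans h1
      apply mul_le_mul_of_nonneg_left _ hqm
      exact hw j hjK
    rw [hcu_eq]
    calc ‖∑ j ∈ Finset.Ico k K, vu j‖
        ≤ ∑ j ∈ Finset.Ico k K, q ^ (j + 1 - k) * δmax :=
          le_trans (norm_sum_le _ _) (Finset.sum_le_sum hterm)
      _ = δmax * ∑ m ∈ Finset.range (K - k), q ^ (m + 1) := by
          rw [Finset.sum_Ico_eq_sum_range, Finset.mul_sum]
          apply Finset.sum_congr rfl
          intro m _
          have he : k + m + 1 - k = m + 1 := by omega
          rw [he]; ring
      _ = δmax * (q * ∑ m ∈ Finset.range (K - k), q ^ m) := by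
          congr 1
          rw [Finset.mul_sum]
          apply Finset.sum_congr rfl
          intro m _
          rw [pow_succ]; ring
      _ ≤ δmax * (q * (1 / (1 - q))) := by
          apply mul_le_mul_of_nonneg_left _ hδmaxnn
          apply mul_le_mul_of_nonneg_left (geom_sum_le_inv_one_sub hq0.le hq1 _) hq0.le
      _ = δmax / (h * γ) := by
          have hβ0 : (0:ℝ) < 1 + h * γ := by nlinarith
          rw [hqdef]
          have h1 : 1 - (1 + h * γ)⁻¹ = (h * γ) / (1 + h * γ) := by
            field_simp; ring
          rw [h1, one_div_div]
          rw [div_eq_mul_inv]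
          congr 1
          field_simp
  calc ‖cfun K μ h lam w k‖ = ‖cs + cu‖ := by rw [hsplit]
    _ ≤ ‖cs‖ + ‖cu‖ := norm_add_le _ _
    _ ≤ δmax / (h * μ) + δmax / (h * γ) := add_le_add hcs hcu

private lemma euclid_abs_apply_le_norm {d : ℕ} (x : EuclideanSpace ℝ (Fin d)) (i : Fin d) :
    |x i| ≤ ‖x‖ := by
  rw [EuclideanSpace.norm_eq]
  have h1 : |x i| = Real.sqrt (‖x i‖ ^ 2) := by
    rw [Real.sqrt_sq_eq_abs, Real.norm_eq_abs, abs_abs]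
  rw [h1]
  apply Real.sqrt_le_sqrt
  exact Finset.single_le_sum (f := fun j => ‖x j‖ ^ 2) (fun j _ => sq_nonneg _)
    (Finset.mem_univ i)

open Set in
private lemma delta_bound {d : ℕ}
    (H : EuclideanSpace ℝ (Fin d) →L[ℝ] EuclideanSpace ℝ (Fin d))
    (xstar : EuclideanSpace ℝ (Fin d)) {L ℓ h : ℝ}
    (hLpos : 0 < L) (hHL : ‖H‖ ≤ L)
    {y : ℝ → EuclideanSpace ℝ (Fin d)}
    (hflow : ∀ t : ℝ, HasDerivAt y (-(H (y t - xstar))) t)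
    {K : ℕ}
    (hℓ : ∀ t : ℝ, 0 ≤ t → t ≤ (K : ℝ) * h → ‖H (y t - xstar)‖ ≤ ℓ)
    (hh : 0 < h) {k : ℕ} (hk : k < K) :
    ‖y (((k : ℝ) + 1) * h) - y ((k : ℝ) * h) + h • H (y ((k : ℝ) * h) - xstar)‖
      ≤ L * ℓ * h ^ 2 / 2 := by
  set a0 : ℝ := (k : ℝ) * h with ha0def
  set b0 : ℝ := a0 + h with hb0def
  have ha0 : 0 ≤ a0 := mul_nonneg (Nat.cast_nonneg k) hh.le
  have hab : a0 ≤ b0 := by simp [hb0def]; linarith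
  have hb0 : b0 ≤ (K : ℝ) * h := by
    have h1 : (k : ℝ) + 1 ≤ (K : ℝ) := by exact_mod_cast hk
    have h2 : ((k : ℝ) + 1) * h ≤ (K : ℝ) * h := by nlinarith
    simpa [hb0def, ha0def, add_mul] using h2
  have step1 : ∀ t ∈ Icc a0 b0, ‖y t - y a0‖ ≤ ℓ * (t - a0) := by
    apply norm_image_sub_le_of_norm_deriv_le_segment'
      (f' := fun t => -(H (y t - xstar)))
    · intro t _; exact (hflow t).hasDerivWithinAt
    · intro t ht
      rw [norm_neg]
      exact hℓ t (le_trans ha0 ht.1) (le_trans ht.2.le hb0)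
  set v : EuclideanSpace ℝ (Fin d) := H (y a0 - xstar) with hvdef
  set g : ℝ → EuclideanSpace ℝ (Fin d) := fun t => y t - y a0 + (t - a0) • v with hgdef
  have hg' : ∀ t : ℝ, HasDerivAt g (H (y a0 - y t)) t := by
    intro t
    have h1 : HasDerivAt (fun t => y t - y a0) (-(H (y t - xstar))) t :=
      (hflow t).sub_const (y a0)
    have h2 : HasDerivAt (fun t : ℝ => (t - a0) • v) ((1 : ℝ) • v) t :=
      ((hasDerivAt_id t).sub_const a0).smul_const v
    have h3 := h1.add h2
    have he : -(H (y t - xstar)) + (1 : ℝ) • v = H (y a0 - y t) := by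
      rw [one_smul, hvdef, neg_add_eq_sub, ← map_sub, sub_sub_sub_cancel_right]
    rwa [he] at h3
  have hB : ∀ t : ℝ, HasDerivAt (fun t => L * ℓ / 2 * (t - a0) ^ 2) (L * ℓ * (t - a0)) t := by
    intro t
    have h1 : HasDerivAt (fun t : ℝ => (t - a0) ^ 2)
        ((2 : ℕ) * (t - a0) ^ (2 - 1) * 1) t := ((hasDerivAt_id t).sub_const a0).pow 2
    have h2 := h1.const_mul (L * ℓ / 2)
    have he : L * ℓ / 2 * ((2 : ℕ) * (t - a0) ^ (2 - 1) * 1) = L * ℓ * (t - a0) := by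
      push_cast; ring
    rwa [he] at h2
  have key := image_norm_le_of_norm_deriv_right_le_deriv_boundary
    (f := g) (f' := fun t => H (y a0 - y t)) (a := a0) (b := b0)
    (B := fun t => L * ℓ / 2 * (t - a0) ^ 2) (B' := fun t => L * ℓ * (t - a0))
    (fun t _ => (hg' t).continuousAt.continuousWithinAt)
    (fun t _ => (hg' t).hasDerivWithinAt)
    (by simp [hgdef])
    hB
    (by
      intro t ht
      have h1 : ‖y a0 - y t‖ ≤ ℓ * (t - a0) := by
        rw [norm_sub_rev]
        exact step1 t ⟨ht.1, ht.2.le⟩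
      calc ‖H (y a0 - y t)‖ ≤ ‖H‖ * ‖y a0 - y t‖ := H.le_opNorm _
        _ ≤ L * (ℓ * (t - a0)) := by
            apply mul_le_mul hHL h1 (norm_nonneg _) hLpos.le
        _ = L * ℓ * (t - a0) := by ring)
  have hfin := key (right_mem_Icc.2 hab)
  have he2 : g b0 = y (((k : ℝ) + 1) * h) - y ((k : ℝ) * h) + h • H (y ((k : ℝ) * h) - xstar) := by
    simp only [hgdef, hb0def, hvdef, ha0def]
    congr 2 <;> ring_nf
  have he3 : L * ℓ / 2 * (b0 - a0) ^ 2 = L * ℓ * h ^ 2 / 2 := by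
    simp [hb0def]; ring
  rw [he2, he3] at hfin
  exact hfin

private lemma eig_mem_spectrum {d : ℕ}
    (H : EuclideanSpace ℝ (Fin d) →L[ℝ] EuclideanSpace ℝ (Fin d))
    {lam : ℝ} {v : EuclideanSpace ℝ (Fin d)} (hv : v ≠ 0) (hHv : H v = lam • v) :
    lam ∈ spectrum ℝ H := by
  rw [spectrum.mem_iff]
  intro hu
  obtain ⟨u, hu⟩ := hu
  have h0 : (algebraMap ℝ (EuclideanSpace ℝ (Fin d) →L[ℝ] EuclideanSpace ℝ (Fin d)) lam - H) v
      = 0 := by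
    simp [Algebra.algebraMap_eq_smul_one, ContinuousLinearMap.sub_apply,
      ContinuousLinearMap.smul_apply, ContinuousLinearMap.one_apply, hHv]
  apply hv
  calc v = (1 : EuclideanSpace ℝ (Fin d) →L[ℝ] EuclideanSpace ℝ (Fin d)) v := rfl
    _ = ((↑u⁻¹ * ↑u : EuclideanSpace ℝ (Fin d) →L[ℝ] EuclideanSpace ℝ (Fin d))) v := by
        rw [u.inv_mul]
    _ = (↑u⁻¹ : EuclideanSpace ℝ (Fin d) →L[ℝ] EuclideanSpace ℝ (Fin d)) ((↑u :
        EuclideanSpace ℝ (Fin d) →L[ℝ] EuclideanSpace ℝ (Fin d)) v) := rfl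
    _ = 0 := by rw [hu, h0, map_zero]

/-- The gradient descent orbit starting at `x0`. -/
private noncomputable def gdorbit {d : ℕ}
    (H : EuclideanSpace ℝ (Fin d) →L[ℝ] EuclideanSpace ℝ (Fin d))
    (xstar x0 : EuclideanSpace ℝ (Fin d)) (h : ℝ) : ℕ → EuclideanSpace ℝ (Fin d)
  | 0 => x0
  | k + 1 => gdorbit H xstar x0 h k - h • H (gdorbit H xstar x0 h k - xstar)

/-- Shadowing for gradient descent on a hyperbolic quadratic saddle: if the symmetric
Hessian H has no eigenvalue in (−γ, μ) and the gradient flow has gradients bounded by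
ℓ up to iteration K, then for 0 < h ≤ min{με/(Lℓ), γε/(2Lℓ), 1/L} there is a gradient
descent orbit ε-shadowing the sampled flow up to iteration K. -/
theorem gradient_descent_shadowing_quadratic_saddle {d : ℕ}
    (H : EuclideanSpace ℝ (Fin d) →L[ℝ] EuclideanSpace ℝ (Fin d))
    (hsa : IsSelfAdjoint H) (xstar : EuclideanSpace ℝ (Fin d))
    (μ γ L ℓ ε h : ℝ) (hμ : 0 < μ) (hγ : 0 < γ) (hε : 0 < ε) (hℓpos : 0 < ℓ)
    (hLpos : 0 < L) (hHL : ‖H‖ ≤ L)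
    (hgap : ∀ lam ∈ spectrum ℝ H, lam ≤ -γ ∨ μ ≤ lam)
    (y : ℝ → EuclideanSpace ℝ (Fin d))
    (hflow : ∀ t : ℝ, HasDerivAt y (-(H (y t - xstar))) t)
    (K : ℕ)
    (hℓ : ∀ t : ℝ, 0 ≤ t → t ≤ (K : ℝ) * h → ‖H (y t - xstar)‖ ≤ ℓ)
    (hh : 0 < h)
    (hhbound : h ≤ min (μ * ε / (L * ℓ)) (min (γ * ε / (2 * L * ℓ)) (1 / L))) :
    ∃ x : ℕ → EuclideanSpace ℝ (Fin d),
      (∀ k : ℕ, x (k + 1) = x k - h • H (x k - xstar)) ∧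
      ∀ k : ℕ, k ≤ K → ‖x k - y ((k : ℝ) * h)‖ ≤ ε := by
  classical
  have hLℓ : (0 : ℝ) < L * ℓ := mul_pos hLpos hℓpos
  have hb1 : h ≤ μ * ε / (L * ℓ) := le_trans hhbound (min_le_left _ _)
  have hb2 : h ≤ γ * ε / (2 * L * ℓ) :=
    le_trans hhbound (le_trans (min_le_right _ _) (min_le_left _ _))
  have hb3 : h ≤ 1 / L :=
    le_trans hhbound (le_trans (min_le_right _ _) (min_le_right _ _))
  have hLh1 : h * L ≤ 1 := by
    rw [le_div_iff₀ hLpos] at hb3; exact hb3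
  have hμε : h * (L * ℓ) ≤ μ * ε := by
    rw [le_div_iff₀ hLℓ] at hb1; exact hb1
  have hγε : h * (2 * L * ℓ) ≤ γ * ε := by
    have h2Lℓ : (0 : ℝ) < 2 * L * ℓ := by positivity
    rw [le_div_iff₀ h2Lℓ] at hb2; linarith
  have hd : Module.finrank ℝ (EuclideanSpace ℝ (Fin d)) = d := finrank_euclideanSpace_fin
  have hT : LinearMap.IsSymmetric
      (↑H : EuclideanSpace ℝ (Fin d) →ₗ[ℝ] EuclideanSpace ℝ (Fin d)) := hsa.isSymmetric
  set lam : Fin d → ℝ := hT.eigenvalues hd with hlamdef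
  set V : EuclideanSpace ℝ (Fin d) ≃ₗᵢ[ℝ] EuclideanSpace ℝ (Fin d) :=
    (hT.eigenvectorBasis hd).repr with hVdef
  have hrepr : ∀ (v : EuclideanSpace ℝ (Fin d)) (i : Fin d),
      V (H v) i = lam i * V v i :=
    fun v i => hT.eigenvectorBasis_apply_self_apply hd v i
  have heig : ∀ i, H (hT.eigenvectorBasis hd i)
      = lam i • hT.eigenvectorBasis hd i :=
    fun i => hT.apply_eigenvectorBasis hd i
  have hnorm1 : ∀ i, ‖hT.eigenvectorBasis hd i‖ = 1 :=
    fun i => (hT.eigenvectorBasis hd).orthonormal.1 i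
  have hlamL : ∀ i, |lam i| ≤ L := by
    intro i
    have h1 : ‖H (hT.eigenvectorBasis hd i)‖ = |lam i| := by
      rw [heig i, norm_smul, Real.norm_eq_abs, hnorm1 i, mul_one]
    have h2 : ‖H (hT.eigenvectorBasis hd i)‖ ≤ ‖H‖ * ‖hT.eigenvectorBasis hd i‖ :=
      H.le_opNorm _
    rw [hnorm1 i, mul_one] at h2
    rw [← h1]; exact le_trans h2 hHL
  have hlamgap : ∀ i, lam i ≤ -γ ∨ μ ≤ lam i := by
    intro i
    apply hgap
    apply eig_mem_spectrum H (v := hT.eigenvectorBasis hd i) _ (heig i)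
    intro h0
    have h1 := hnorm1 i
    rw [h0, norm_zero] at h1
    norm_num at h1
  have hstab : ∀ i, μ ≤ lam i → 0 ≤ 1 - h * lam i ∧ 1 - h * lam i ≤ 1 - h * μ := by
    intro i hi
    have h1 : lam i ≤ L := le_trans (le_abs_self _) (hlamL i)
    constructor
    · nlinarith
    · nlinarith
  have hstab2 : (∃ i, μ ≤ lam i) → 0 ≤ 1 - h * μ := by
    rintro ⟨i, hi⟩
    have h1 : lam i ≤ L := le_trans (le_abs_self _) (hlamL i)
    nlinarith
  have hunst : ∀ i, ¬ μ ≤ lam i → 1 + h * γ ≤ 1 - h * lam i := by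
    intro i hi
    have h1 : lam i ≤ -γ := (hlamgap i).resolve_right hi
    nlinarith
  have hunstne : ∀ i, ¬ μ ≤ lam i → 1 - h * lam i ≠ 0 := by
    intro i hi
    have h1 := hunst i hi
    have hpos : (0:ℝ) < 1 - h * lam i := by nlinarith
    exact hpos.ne'
  set δmax : ℝ := L * ℓ * h ^ 2 / 2 with hδmaxdef
  have hδmaxnn : 0 ≤ δmax := by positivity
  set δf : ℕ → EuclideanSpace ℝ (Fin d) := fun k =>
    y (((k : ℝ) + 1) * h) - y ((k : ℝ) * h) + h • H (y ((k : ℝ) * h) - xstar) with hδfdef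
  have hδb : ∀ k, k < K → ‖δf k‖ ≤ δmax := fun k hk =>
    delta_bound H xstar hLpos hHL hflow hℓ hh hk
  set w : ℕ → EuclideanSpace ℝ (Fin d) := fun k => V (δf k) with hwdef
  have hwb : ∀ k, k < K → ‖w k‖ ≤ δmax := by
    intro k hk
    calc ‖w k‖ = ‖δf k‖ := V.norm_map _
      _ ≤ δmax := hδb k hk
  set ef : ℕ → EuclideanSpace ℝ (Fin d) := fun k => V.symm (cfun K μ h lam w k) with hefdef
  set x : ℕ → EuclideanSpace ℝ (Fin d) := gdorbit H xstar (y 0 + ef 0) h with hxdef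
  have hx0 : x 0 = y 0 + ef 0 := rfl
  have hxS : ∀ k : ℕ, x (k + 1) = x k - h • H (x k - xstar) := fun k => rfl
  refine ⟨x, hxS, ?_⟩
  have htrack : ∀ k, k ≤ K → x k = y ((k : ℝ) * h) + ef k := by
    intro k
    induction k with
    | zero =>
      intro _
      rw [hx0]
      norm_num
    | succ k ih =>
      intro hk1
      have hk : k < K := hk1
      rw [hxS k, ih hk.le]
      have harg : (y ((k : ℝ) * h) + ef k) - xstar = (y ((k : ℝ) * h) - xstar) + ef k := by
        abel
      rw [harg, map_add, smul_add]
      have hefstep : ef k - h • H (ef k) - δf k = ef (k + 1) := by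
        have hwk : δf k = V.symm (w k) := by
          rw [hwdef, V.symm_apply_apply]
        rw [hefdef, hwk]
        apply V.injective
        rw [map_sub, map_sub, map_smul, V.apply_symm_apply, V.apply_symm_apply,
          V.apply_symm_apply]
        ext i
        have e1 : (cfun K μ h lam w k - h • V (H (V.symm (cfun K μ h lam w k))) - w k) i
            = cfun K μ h lam w k i - h * (V (H (V.symm (cfun K μ h lam w k))) i) - w k i :=
          rfl
        rw [e1, hrepr, V.apply_symm_apply, cfun_step hunstne hk i]
        ring
      have hflowstep : y ((k : ℝ) * h) - h • H (y ((k : ℝ) * h) - xstar)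
          = y (((k : ℝ) + 1) * h) - δf k := by
        simp only [hδfdef]
        abel
      calc y ((k : ℝ) * h) + ef k - (h • H (y ((k : ℝ) * h) - xstar) + h • H (ef k))
          = (y ((k : ℝ) * h) - h • H (y ((k : ℝ) * h) - xstar)) + (ef k - h • H (ef k)) := by
            abel
        _ = (y (((k : ℝ) + 1) * h) - δf k) + (ef k - h • H (ef k)) := by rw [hflowstep]
        _ = y (((k : ℝ) + 1) * h) + (ef k - h • H (ef k) - δf k) := by abel
        _ = y (((k : ℝ) + 1) * h) + ef (k + 1) := by rw [hefstep]
        _ = y (((k + 1 : ℕ) : ℝ) * h) + ef (k + 1) := by push_cast; ring_nf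
  intro k hk
  rw [htrack k hk]
  have h1 : y ((k : ℝ) * h) + ef k - y ((k : ℝ) * h) = ef k := by abel
  rw [h1, hefdef]
  have h2 : ‖V.symm (cfun K μ h lam w k)‖ = ‖cfun K μ h lam w k‖ := V.symm.norm_map _
  rw [h2]
  apply le_trans (cfun_norm hμ hγ hh hδmaxnn hstab hstab2 hunst hwb hk)
  have e1 : δmax / (h * μ) ≤ ε / 2 := by
    rw [hδmaxdef, div_le_iff₀ (by positivity)]
    nlinarith
  have e2 : δmax / (h * γ) ≤ ε / 4 := by
    rw [hδmaxdef, div_le_iff₀ (by positivity)]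
    nlinarith
  linarith
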